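/- For every topological space X, the profinite completion map u_X : X → X̂ induces a homeomorphism X̂ ≅ Spec(𝔹(X)), i.e., the unique continuous map β̂ : X̂ → Spec(𝔹(X)) with β = β̂ ∘ u_X is a homeomorphism. -/

import Mathlib

instance : TopologicalSpace (ZMod 2) := ⊥
instance : DiscreteTopology (ZMod 2) := ⟨rfl⟩

/-- The collection of clopen equivalence relations `r` on `X` whose quotient
`X/r` is finite and discrete. -/
abbrev FinClopenSetoid (X : Type) [TopologicalSpace X] : Type :=
  {r : Setoid X // IsClopen {p : X × X | r.r p.1 p.2} ∧ Finite (Quotient r) ∧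
    DiscreteTopology (Quotient r)}

/-- The profinite completion of a topological space `X`: the projective limit of
the finite discrete quotients `X/r` over all clopen equivalence relations `r`
with finite discrete quotient. -/
abbrev ProfiniteCompletion (X : Type) [TopologicalSpace X] : Type :=
  {f : ∀ r : FinClopenSetoid X, Quotient r.1 //
    ∀ (r s : FinClopenSetoid X), r.1 ≤ s.1 →
      ∀ x : X, f r = Quotient.mk r.1 x → f s = Quotient.mk s.1 x}

/-- The canonical continuous map `u_X : X → X̂`. -/
def uX (X : Type) [TopologicalSpace X] : X → ProfiniteCompletion X :=
  fun x => ⟨fun r => Quotient.mk r.1 x, by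
    intro r s h y hy
    exact Quotient.sound (h (Quotient.exact hy))⟩

open scoped Classical

noncomputable section PCHelp

variable {X : Type} [TopologicalSpace X]

/-- The kernel setoid of a continuous map to a finite discrete space is a
FinClopenSetoid. -/
def kerFCS {Y : Type} [TopologicalSpace Y] [DiscreteTopology Y] [Finite Y]
    (f : C(X, Y)) : FinClopenSetoid X := by
  refine ⟨Setoid.ker f, ?_, ?_, ?_⟩
  · have h : {p : X × X | (Setoid.ker ⇑f).r p.1 p.2}
        = (fun p : X × X => (f p.1, f p.2)) ⁻¹' {q : Y × Y | q.1 = q.2} := rfl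
    rw [h]
    exact (isClopen_discrete _).preimage
      ((f.continuous.comp continuous_fst).prodMk (f.continuous.comp continuous_snd))
  · refine Finite.of_injective (Quotient.lift f (fun a b h => h)) ?_
    rintro ⟨a⟩ ⟨b⟩ h
    exact Quotient.sound (h : f a = f b)
  · refine discreteTopology_iff_isOpen_singleton.mpr ?_
    rintro ⟨x⟩
    have h : Quotient.mk (Setoid.ker ⇑f) ⁻¹' {Quotient.mk (Setoid.ker ⇑f) x}
        = ⇑f ⁻¹' {f x} := by
      ext y
      simp only [Set.mem_preimage, Set.mem_singleton_iff, Quotient.eq]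
      exact ⟨fun h => h, fun h => h⟩
    have : IsOpen (Quotient.mk (Setoid.ker ⇑f) ⁻¹' {Quotient.mk (Setoid.ker ⇑f) x}) := by
      rw [h]; exact (isOpen_discrete _).preimage f.continuous
    exact this

lemma exists_rep' {r : FinClopenSetoid X} (q : Quotient r.1) :
    ∃ x : X, q = Quotient.mk r.1 x := by
  obtain ⟨x, hx⟩ := Quotient.exists_rep q
  exact ⟨x, hx.symm⟩

/-- Evaluation of a continuous function at a point of the profinite completion. -/
def evalz (z : ProfiniteCompletion X) (f : C(X, ZMod 2)) : ZMod 2 :=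
  Quotient.lift f (fun a b h => h) (z.1 (kerFCS f))

lemma evalz_of_le (z : ProfiniteCompletion X) {f : C(X, ZMod 2)}
    {r : FinClopenSetoid X} (hle : r.1 ≤ Setoid.ker ⇑f) {x : X}
    (hx : z.1 r = Quotient.mk r.1 x) : evalz z f = f x := by
  have h := z.2 r (kerFCS f) hle x hx
  rw [evalz, h]
  rfl

lemma evalz_uX (x : X) (f : C(X, ZMod 2)) : evalz (uX X x) f = f x := rfl

/-- The evaluation ring hom. -/
def phiz (z : ProfiniteCompletion X) : C(X, ZMod 2) →+* ZMod 2 where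
  toFun := evalz z
  map_one' := by
    show evalz _ _ = _
    obtain ⟨x, hx⟩ := exists_rep' (z.1 (kerFCS (1 : C(X, ZMod 2))))
    rw [evalz_of_le z le_rfl hx]; rfl
  map_zero' := by
    show evalz _ _ = _
    obtain ⟨x, hx⟩ := exists_rep' (z.1 (kerFCS (0 : C(X, ZMod 2))))
    rw [evalz_of_le z le_rfl hx]; rfl
  map_mul' f g := by
    show evalz _ _ = evalz _ _ * evalz _ _
    set h : C(X, ZMod 2 × ZMod 2) := f.prodMk g with hh
    obtain ⟨x, hx⟩ := exists_rep' (z.1 (kerFCS h))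
    have h1 : (kerFCS h).1 ≤ Setoid.ker ⇑f := fun a b hab => congrArg Prod.fst hab
    have h2 : (kerFCS h).1 ≤ Setoid.ker ⇑g := fun a b hab => congrArg Prod.snd hab
    have h3 : (kerFCS h).1 ≤ Setoid.ker ⇑(f * g) := by
      intro a b hab
      have h1' : f a = f b := congrArg Prod.fst hab
      have h2' : g a = g b := congrArg Prod.snd hab
      show f a * g a = f b * g b
      rw [h1', h2']
    rw [evalz_of_le z h1 hx, evalz_of_le z h2 hx, evalz_of_le z h3 hx]
    rfl
  map_add' f g := by
    show evalz _ _ = evalz _ _ + evalz _ _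
    set h : C(X, ZMod 2 × ZMod 2) := f.prodMk g with hh
    obtain ⟨x, hx⟩ := exists_rep' (z.1 (kerFCS h))
    have h1 : (kerFCS h).1 ≤ Setoid.ker ⇑f := fun a b hab => congrArg Prod.fst hab
    have h2 : (kerFCS h).1 ≤ Setoid.ker ⇑g := fun a b hab => congrArg Prod.snd hab
    have h3 : (kerFCS h).1 ≤ Setoid.ker ⇑(f + g) := by
      intro a b hab
      have h1' : f a = f b := congrArg Prod.fst hab
      have h2' : g a = g b := congrArg Prod.snd hab
      show f a + g a = f b + g b
      rw [h1', h2']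
    rw [evalz_of_le z h1 hx, evalz_of_le z h2 hx, evalz_of_le z h3 hx]
    rfl

/-- The forward map `X̂ → Spec 𝔹(X)`. -/
def PhiPC (z : ProfiniteCompletion X) : PrimeSpectrum C(X, ZMod 2) :=
  ⟨RingHom.ker (phiz z), RingHom.ker_isPrime _⟩

/-- Indicator function of a class of a finite clopen setoid. -/
def ind (r : FinClopenSetoid X) (q : Quotient r.1) : C(X, ZMod 2) :=
  ⟨fun x => if Quotient.mk r.1 x = q then 1 else 0, by
    haveI := r.2.2.2
    have h1 : Continuous (fun p : Quotient r.1 => if p = q then (1 : ZMod 2) else 0) :=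
      continuous_of_discreteTopology
    have h2 : Continuous (Quotient.mk r.1 : X → Quotient r.1) := continuous_quotient_mk'
    exact h1.comp h2⟩

lemma ind_apply (r : FinClopenSetoid X) (q : Quotient r.1) (x : X) :
    ind r q x = if Quotient.mk r.1 x = q then 1 else 0 := rfl

lemma ind_mul_ind (r : FinClopenSetoid X) {q q' : Quotient r.1} (h : q ≠ q') :
    ind r q * ind r q' = 0 := by
  ext x
  simp only [ContinuousMap.mul_apply, ind_apply, ContinuousMap.zero_apply]
  split_ifs with h1 h2
  · exact (h (h1.symm.trans h2)).elim
  · exact mul_zero _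
  all_goals exact zero_mul _

lemma sum_ind (r : FinClopenSetoid X) :
    haveI : Fintype (Quotient r.1) := @Fintype.ofFinite _ r.2.2.1
    ∑ q : Quotient r.1, ind r q = 1 := by
  haveI : Fintype (Quotient r.1) := @Fintype.ofFinite _ r.2.2.1
  ext x
  rw [ContinuousMap.coe_sum]
  simp only [Finset.sum_apply, ind_apply, ContinuousMap.one_apply]
  rw [Finset.sum_ite_eq]
  simp

lemma exists_ind_not_mem (P : PrimeSpectrum C(X, ZMod 2)) (r : FinClopenSetoid X) :
    ∃ q : Quotient r.1, ind r q ∉ P.asIdeal := by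
  haveI : Fintype (Quotient r.1) := @Fintype.ofFinite _ r.2.2.1
  by_contra hall
  push_neg at hall
  have h1 : (1 : C(X, ZMod 2)) ∈ P.asIdeal := by
    rw [← sum_ind r]
    exact Ideal.sum_mem _ fun q _ => hall q
  exact P.isPrime.ne_top (Ideal.eq_top_iff_one _ |>.mpr h1)

lemma ind_unique (P : PrimeSpectrum C(X, ZMod 2)) (r : FinClopenSetoid X)
    {q q' : Quotient r.1} (hq : ind r q ∉ P.asIdeal) (hq' : ind r q' ∉ P.asIdeal) :
    q = q' := by
  by_contra hne
  have h0 : ind r q * ind r q' ∈ P.asIdeal := by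
    rw [ind_mul_ind r hne]; exact zero_mem _
  rcases P.isPrime.mem_or_mem h0 with h | h
  exacts [hq h, hq' h]

/-- The inverse map components. -/
def psiFun (P : PrimeSpectrum C(X, ZMod 2)) (r : FinClopenSetoid X) :
    Quotient r.1 :=
  Classical.choose (exists_ind_not_mem P r)

lemma psiFun_spec (P : PrimeSpectrum C(X, ZMod 2)) (r : FinClopenSetoid X) :
    ind r (psiFun P r) ∉ P.asIdeal :=
  Classical.choose_spec (exists_ind_not_mem P r)

lemma psiFun_eq (P : PrimeSpectrum C(X, ZMod 2)) (r : FinClopenSetoid X)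
    {q : Quotient r.1} (h : ind r q ∉ P.asIdeal) : psiFun P r = q :=
  ind_unique P r (psiFun_spec P r) h

/-- The inverse map `Spec 𝔹(X) → X̂`. -/
def PsiPC (P : PrimeSpectrum C(X, ZMod 2)) : ProfiniteCompletion X := by
  refine ⟨psiFun P, ?_⟩
  intro r s hle x hx
  refine psiFun_eq P s ?_
  intro hmem
  apply psiFun_spec P r
  have hprod : ind r (Quotient.mk r.1 x) * ind s (Quotient.mk s.1 x)
      = ind r (Quotient.mk r.1 x) := by
    ext y
    simp only [ContinuousMap.mul_apply, ind_apply]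
    split_ifs with h1 h2
    · exact mul_one 1
    · exact absurd (Quotient.sound (hle (Quotient.exact h1))) h2
    all_goals exact zero_mul _
  rw [hx, ← hprod]
  exact Ideal.mul_mem_left _ _ hmem

lemma phiz_psiFun (P : PrimeSpectrum C(X, ZMod 2)) (f : C(X, ZMod 2)) :
    f ∈ RingHom.ker (phiz (PsiPC P)) ↔ f ∈ P.asIdeal := by
  set r := kerFCS f with hr
  obtain ⟨x, hx⟩ := exists_rep' (psiFun P r)
  have hval : phiz (PsiPC P) f = f x := evalz_of_le (PsiPC P) le_rfl hx
  have hindne : ind r (Quotient.mk r.1 x) ∉ P.asIdeal := hx ▸ psiFun_spec P r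
  rw [RingHom.mem_ker, hval]
  have hcases : f x = 0 ∨ f x = 1 := by
    have : ∀ a : ZMod 2, a = 0 ∨ a = 1 := by decide
    exact this (f x)
  rcases hcases with h0 | h1
  · simp only [h0, true_iff]
    -- f x = 0 : show f ∈ P
    have hprod : f * ind r (Quotient.mk r.1 x) = 0 := by
      ext y
      simp only [ContinuousMap.mul_apply, ind_apply, ContinuousMap.zero_apply]
      split_ifs with h
      · have : f y = f x := Quotient.exact h
        rw [this, h0, zero_mul]
      · exact mul_zero _
    have : f * ind r (Quotient.mk r.1 x) ∈ P.asIdeal := by rw [hprod]; exact zero_mem _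
    rcases P.isPrime.mem_or_mem this with h | h
    · exact h
    · exact absurd h hindne
  · -- f x = 1 : f = ind r (mk x), so f ∉ P
    have hfeq : f = ind r (Quotient.mk r.1 x) := by
      ext y
      rw [ind_apply]
      split_ifs with h
      · have : f y = f x := Quotient.exact h
        rw [this, h1]
      · have hy : f y = 0 ∨ f y = 1 := by
          have : ∀ a : ZMod 2, a = 0 ∨ a = 1 := by decide
          exact this (f y)
        rcases hy with hy | hy
        · exact hy
        · exact absurd (Quotient.sound (show f y = f x by rw [hy, h1])) h
    constructor
    · intro h; rw [h1] at h; exact absurd h one_ne_zero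
    · intro h; exact absurd (hfeq ▸ h) hindne

lemma PsiPC_PhiPC (z : ProfiniteCompletion X) : PsiPC (PhiPC z) = z := by
  refine Subtype.ext (funext fun r => ?_)
  obtain ⟨x, hx⟩ := exists_rep' (z.1 r)
  rw [hx]
  refine psiFun_eq (PhiPC z) r ?_
  intro hmem
  have hle : r.1 ≤ Setoid.ker ⇑(ind r (Quotient.mk r.1 x)) := by
    intro a b hab
    show ind r (Quotient.mk r.1 x) a = ind r (Quotient.mk r.1 x) b
    simp only [ind_apply]
    rw [Quotient.sound hab]
  have : phiz z (ind r (Quotient.mk r.1 x)) = ind r (Quotient.mk r.1 x) x :=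
    evalz_of_le z hle hx
  have hmem' : phiz z (ind r (Quotient.mk r.1 x)) = 0 :=
    RingHom.mem_ker.mp hmem
  rw [this, ind_apply, if_pos rfl] at hmem'
  exact one_ne_zero hmem'

lemma PhiPC_PsiPC (P : PrimeSpectrum C(X, ZMod 2)) : PhiPC (PsiPC P) = P := by
  refine PrimeSpectrum.ext ?_
  exact Ideal.ext fun f => phiz_psiFun P f

lemma continuous_PhiPC : Continuous (PhiPC : ProfiniteCompletion X → _) := by
  rw [PrimeSpectrum.isTopologicalBasis_basic_opens.continuous_iff]
  rintro s ⟨f, rfl⟩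
  have hset : PhiPC ⁻¹' (PrimeSpectrum.basicOpen f : Set (PrimeSpectrum C(X, ZMod 2)))
      = (fun z : ProfiniteCompletion X => evalz z f) ⁻¹' ({0}ᶜ) := by
    ext z
    simp only [Set.mem_preimage, SetLike.mem_coe, PrimeSpectrum.mem_basicOpen,
      Set.mem_compl_iff, Set.mem_singleton_iff]
    exact Iff.rfl
  rw [hset]
  have hc : Continuous (fun z : ProfiniteCompletion X => evalz z f) := by
    haveI := (kerFCS (X := X) f).2.2.2
    exact continuous_of_discreteTopology.comp
      ((continuous_apply (kerFCS f)).comp continuous_subtype_val)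
  exact (isOpen_discrete _).preimage hc

lemma continuous_PsiPC : Continuous (PsiPC : PrimeSpectrum C(X, ZMod 2) → _) := by
  refine Continuous.subtype_mk (continuous_pi fun r => ?_) _
  haveI := r.2.2.2
  rw [continuous_discrete_rng]
  intro q
  have hset : (fun P => psiFun P r) ⁻¹' {q}
      = (PrimeSpectrum.basicOpen (ind r q) : Set (PrimeSpectrum C(X, ZMod 2))) := by
    ext P
    simp only [Set.mem_preimage, Set.mem_singleton_iff, SetLike.mem_coe,
      PrimeSpectrum.mem_basicOpen]
    constructor
    · intro h; exact h ▸ psiFun_spec P r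
    · intro h; exact psiFun_eq P r h
  rw [hset]
  exact (PrimeSpectrum.basicOpen _).isOpen

/-- The homeomorphism. -/
def homeoPC : ProfiniteCompletion X ≃ₜ PrimeSpectrum C(X, ZMod 2) where
  toFun := PhiPC
  invFun := PsiPC
  left_inv := PsiPC_PhiPC
  right_inv := PhiPC_PsiPC
  continuous_toFun := continuous_PhiPC
  continuous_invFun := continuous_PsiPC

lemma dense_range_uX : Dense (Set.range (uX X)) := by
  rw [dense_iff_inter_open]
  intro U hU ⟨z, hz⟩
  obtain ⟨V, hV, rfl⟩ := isOpen_induced_iff.mp hU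
  obtain ⟨I, u, hIu, hsub⟩ := isOpen_pi_iff.mp hV z.1 hz
  -- common refinement
  haveI : ∀ i : I, Finite (Quotient (i.1 : FinClopenSetoid X).1) := fun i => i.1.2.2.1
  haveI : ∀ i : I, DiscreteTopology (Quotient (i.1 : FinClopenSetoid X).1) :=
    fun i => i.1.2.2.2
  set F : C(X, ∀ i : I, Quotient (i.1 : FinClopenSetoid X).1) :=
    ⟨fun x i => Quotient.mk (i.1 : FinClopenSetoid X).1 x, by
      refine continuous_pi fun i => ?_
      exact continuous_quotient_mk'⟩ with hF
  set r0 : FinClopenSetoid X := kerFCS F with hr0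
  obtain ⟨x, hx⟩ := exists_rep' (z.1 r0)
  have hcoord : ∀ i ∈ I, z.1 i = Quotient.mk i.1 x := by
    intro i hi
    refine z.2 r0 i ?_ x hx
    intro a b hab
    have := congrFun hab ⟨i, hi⟩
    exact Quotient.exact this
  refine ⟨uX X x, ?_, ⟨x, rfl⟩⟩
  show (uX X x).1 ∈ V
  refine hsub ?_
  intro i hi
  show Quotient.mk i.1 x ∈ u i
  rw [← hcoord i hi]
  exact (hIu i hi).2

lemma zmod2_mul_one_add (a : ZMod 2) : a * (1 + a) = 0 := by revert a; decide

lemma mem_iff_one_add_not_mem (P : PrimeSpectrum C(X, ZMod 2)) (f : C(X, ZMod 2)) :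
    f ∈ P.asIdeal ↔ (1 + f) ∉ P.asIdeal := by
  constructor
  · intro hf hg
    apply P.isPrime.ne_top
    rw [Ideal.eq_top_iff_one]
    have : (1 : C(X, ZMod 2)) = f + (1 + f) := by
      ext y
      have : ∀ a : ZMod 2, 1 = a + (1 + a) := by decide
      simpa using this (f y)
    rw [this]
    exact Ideal.add_mem _ hf hg
  · intro hg
    have hprod : f * (1 + f) = 0 := by
      ext y
      simpa using zmod2_mul_one_add (f y)
    have : f * (1 + f) ∈ P.asIdeal := by rw [hprod]; exact zero_mem _
    rcases P.isPrime.mem_or_mem this with h | h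
    · exact h
    · exact absurd h hg

lemma t2_spec : T2Space (PrimeSpectrum C(X, ZMod 2)) := by
  constructor
  intro P Q hne
  have hI : P.asIdeal ≠ Q.asIdeal := fun h => hne (PrimeSpectrum.ext h)
  have : ∃ f : C(X, ZMod 2), (f ∈ P.asIdeal ∧ f ∉ Q.asIdeal) ∨
      (f ∉ P.asIdeal ∧ f ∈ Q.asIdeal) := by
    by_contra hc
    push_neg at hc
    apply hI
    ext f
    rcases hc f with ⟨h1, h2⟩
    constructor
    · intro h; exact h1 h
    · intro h; by_contra h'; exact h2 h' h
  obtain ⟨f, hf⟩ := this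
  have key : ∀ R : PrimeSpectrum C(X, ZMod 2), f ∈ R.asIdeal ↔ (1 + f) ∉ R.asIdeal :=
    fun R => mem_iff_one_add_not_mem R f
  rcases hf with ⟨h1, h2⟩ | ⟨h1, h2⟩
  · refine ⟨PrimeSpectrum.basicOpen (1 + f), PrimeSpectrum.basicOpen f,
      (PrimeSpectrum.basicOpen _).isOpen, (PrimeSpectrum.basicOpen _).isOpen,
      (key P).mp h1, h2, ?_⟩
    rw [Set.disjoint_left]
    intro R hR hR'
    have hRm : (1 + f) ∉ R.asIdeal := hR
    have hRm' : f ∉ R.asIdeal := hR'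
    exact hRm' ((key R).mpr hRm)
  · refine ⟨PrimeSpectrum.basicOpen f, PrimeSpectrum.basicOpen (1 + f),
      (PrimeSpectrum.basicOpen _).isOpen, (PrimeSpectrum.basicOpen _).isOpen,
      h1, (key Q).mp h2, ?_⟩
    rw [Set.disjoint_left]
    intro R hR hR'
    have hRm : f ∉ R.asIdeal := hR
    have hRm' : (1 + f) ∉ R.asIdeal := hR'
    exact hRm ((key R).mpr hRm')

end PCHelp

/-- The unique continuous map `β̂ : X̂ → Spec 𝔹(X)` satisfying `β = β̂ ∘ u_X`,
where `β p` is the maximal ideal of functions vanishing at `p`, is a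
homeomorphism; moreover any two continuous maps `X̂ → Spec 𝔹(X)` agreeing with
`β` on the image of `u_X` are equal. -/
theorem profiniteCompletion_homeo_spec (X : Type) [TopologicalSpace X] :
    (∃ e : ProfiniteCompletion X ≃ₜ PrimeSpectrum C(X, ZMod 2),
        ∀ (x : X) (f : C(X, ZMod 2)), f ∈ (e (uX X x)).asIdeal ↔ f x = 0) ∧
    (∀ g₁ g₂ : C(ProfiniteCompletion X, PrimeSpectrum C(X, ZMod 2)),
        (∀ x : X, g₁ (uX X x) = g₂ (uX X x)) → g₁ = g₂) := by
  constructor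
  · refine ⟨homeoPC, fun x f => ?_⟩
    show f ∈ RingHom.ker (phiz (uX X x)) ↔ f x = 0
    rw [RingHom.mem_ker]
    exact Iff.rfl
  · intro g₁ g₂ h
    haveI := t2_spec (X := X)
    have : ⇑g₁ = ⇑g₂ := by
      refine Continuous.ext_on dense_range_uX g₁.continuous g₂.continuous ?_
      rintro _ ⟨x, rfl⟩
      exact h x
    exact DFunLike.coe_injective this
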